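/- For any operator C on H = H_A ⊗ H_B with operator Schmidt coefficients {μ_a}_{a=1}^{d}, the computable cross norm of C equals the sum of its Schmidt coefficients: ‖C‖_CCN = Σ_{a=1}^{d} μ_a. Equivalently, ‖C‖_CCN equals the trace norm ‖C̃‖_tr = tr(√(C̃† C̃)) of the coefficient matrix C̃_{aα} = ⟨F_a^A ⊗ F_α^B, C⟩_HS, for any choice of Hilbert-Schmidt-orthonormal bases {F_a^A} of L(H_A) and {F_α^B} of L(H_B). -/

import Mathlib

open scoped Kronecker ComplexOrder
open Matrix Finset

/-- Hilbert-Schmidt inner product on matrices. -/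
noncomputable def hsInner {n : Type*} [Fintype n] (A B : Matrix n n ℂ) : ℂ :=
  (Aᴴ * B).trace

/-- Hilbert-Schmidt norm. -/
noncomputable def hsNorm {n : Type*} [Fintype n] (A : Matrix n n ℂ) : ℝ :=
  Real.sqrt (hsInner A A).re

/-- The computable cross norm (CCN) on bipartite operators. -/
noncomputable def ccn {NA NB : ℕ} (C : Matrix (Fin NA × Fin NB) (Fin NA × Fin NB) ℂ) : ℝ :=
  sInf { r : ℝ | ∃ (n : ℕ) (A : Fin n → Matrix (Fin NA) (Fin NA) ℂ)
    (B : Fin n → Matrix (Fin NB) (Fin NB) ℂ),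
    C = ∑ k, A k ⊗ₖ B k ∧ r = ∑ k, hsNorm (A k) * hsNorm (B k) }

/-- An operator Schmidt decomposition of a bipartite operator `C`:
`C = ∑ a, μ a • (E a ⊗ₖ F a)` with `μ a ≥ 0` and `E`, `F` orthonormal families
with respect to the Hilbert-Schmidt inner product. -/
def SchmidtDecomp {NA NB : ℕ} (C : Matrix (Fin NA × Fin NB) (Fin NA × Fin NB) ℂ)
    (μ : Fin (min (NA ^ 2) (NB ^ 2)) → ℝ)
    (E : Fin (min (NA ^ 2) (NB ^ 2)) → Matrix (Fin NA) (Fin NA) ℂ)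
    (F : Fin (min (NA ^ 2) (NB ^ 2)) → Matrix (Fin NB) (Fin NB) ℂ) : Prop :=
  (∀ a, 0 ≤ μ a) ∧
  (∀ a b, hsInner (E a) (E b) = if a = b then 1 else 0) ∧
  (∀ a b, hsInner (F a) (F b) = if a = b then 1 else 0) ∧
  C = ∑ a, (μ a : ℂ) • (E a ⊗ₖ F a)

lemma hsInner_eq_sum {n : Type*} [Fintype n] (A B : Matrix n n ℂ) :
    hsInner A B = ∑ p : n × n, star (A p.1 p.2) * B p.1 p.2 := by
  rw [hsInner, Matrix.trace, Fintype.sum_prod_type]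
  simp only [Matrix.diag_apply, Matrix.mul_apply, Matrix.conjTranspose_apply]
  exact Finset.sum_comm

lemma hsInner_conj {n : Type*} [Fintype n] (A B : Matrix n n ℂ) :
    star (hsInner A B) = hsInner B A := by
  simp [hsInner_eq_sum, mul_comm]

lemma hsInner_smul_right {n : Type*} [Fintype n] (c : ℂ) (A B : Matrix n n ℂ) :
    hsInner A (c • B) = c * hsInner A B := by
  simp only [hsInner_eq_sum, Finset.mul_sum, Pi.smul_apply, Matrix.smul_apply, smul_eq_mul,
    star_mul']
  exact Finset.sum_congr rfl fun _ _ => by ring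

lemma hsInner_sum_right {n : Type*} [Fintype n] {ι : Type*} (s : Finset ι)
    (A : Matrix n n ℂ) (B : ι → Matrix n n ℂ) :
    hsInner A (∑ k ∈ s, B k) = ∑ k ∈ s, hsInner A (B k) := by
  simp only [hsInner_eq_sum, Matrix.sum_apply, Finset.mul_sum]
  rw [Finset.sum_comm]

lemma hsInner_kron {n m : Type*} [Fintype n] [Fintype m]
    (X Z : Matrix n n ℂ) (Y W : Matrix m m ℂ) :
    hsInner (X ⊗ₖ Y) (Z ⊗ₖ W) = hsInner X Z * hsInner Y W := by
  simp only [hsInner_eq_sum, Matrix.kronecker_apply, Finset.sum_mul_sum]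
  rw [← Fintype.sum_prod_type']
  exact (Fintype.sum_equiv (Equiv.prodProdProdComm n n m m) _ _ (fun x => by
    simp only [Equiv.prodProdProdComm_apply, Matrix.kronecker_apply, star_mul']
    ring)).symm

noncomputable def vec {n : Type*} [Fintype n] (A : Matrix n n ℂ) : EuclideanSpace ℂ (n × n) :=
  WithLp.toLp 2 (fun p : n × n => A p.1 p.2)

lemma inner_vec {n : Type*} [Fintype n] (A B : Matrix n n ℂ) :
    inner ℂ (_root_.vec A) (_root_.vec B) = hsInner A B := by
  simp [_root_.vec, hsInner_eq_sum, PiLp.inner_apply, RCLike.inner_apply, mul_comm]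

lemma norm_vec {n : Type*} [Fintype n] (A : Matrix n n ℂ) : ‖_root_.vec A‖ = hsNorm A := by
  rw [hsNorm, ← inner_vec, @norm_eq_sqrt_re_inner ℂ]; rfl

lemma hsNorm_nonneg {n : Type*} [Fintype n] (A : Matrix n n ℂ) : 0 ≤ hsNorm A :=
  Real.sqrt_nonneg _

lemma hsNorm_smul {n : Type*} [Fintype n] (c : ℂ) (A : Matrix n n ℂ) :
    hsNorm (c • A) = ‖c‖ * hsNorm A := by
  rw [← norm_vec, ← norm_vec, show _root_.vec (c • A) = c • _root_.vec A from rfl, norm_smul]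

lemma bessel {n : Type*} [Fintype n] {ι : Type*} [Fintype ι] [DecidableEq ι] {G : ι → Matrix n n ℂ}
    (hG : ∀ a b, hsInner (G a) (G b) = if a = b then 1 else 0) (A : Matrix n n ℂ) :
    ∑ a, ‖hsInner (G a) A‖ ^ 2 ≤ hsNorm A ^ 2 := by
  classical
  have horth : Orthonormal ℂ (fun a => _root_.vec (G a)) := by
    rw [orthonormal_iff_ite]
    intro i j
    rw [inner_vec, hG]
  have := horth.sum_inner_products_le (s := Finset.univ) (_root_.vec A)
  simpa only [inner_vec, norm_vec] using this

lemma complete {n : Type*} [Fintype n] [DecidableEq n] {N : ℕ}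
    (hN : Fintype.card (n × n) = N) (G : Fin N → Matrix n n ℂ)
    (hG : ∀ a b, hsInner (G a) (G b) = if a = b then 1 else 0)
    (p q : n × n) : ∑ a, G a p.1 p.2 * star (G a q.1 q.2) = if p = q then 1 else 0 := by
  let e : (n × n) ≃ Fin N := Fintype.equivFinOfCardEq hN
  let P : Matrix (Fin N) (Fin N) ℂ := Matrix.of fun a c => star (G a (e.symm c).1 (e.symm c).2)
  have h1 : P * Pᴴ = 1 := by
    ext a b
    simp only [Matrix.mul_apply, Matrix.conjTranspose_apply, P, Matrix.of_apply, star_star]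
    rw [← Equiv.sum_comp e
      (fun c => star (G a (e.symm c).1 (e.symm c).2) * G b (e.symm c).1 (e.symm c).2)]
    simp only [Equiv.symm_apply_apply]
    rw [← hsInner_eq_sum, hG, Matrix.one_apply]
  have h2 : Pᴴ * P = 1 := mul_eq_one_comm.mp h1
  have h3 := congrFun (congrFun h2 (e p)) (e q)
  simp only [Matrix.mul_apply, Matrix.conjTranspose_apply, P, Matrix.of_apply, star_star,
    Equiv.symm_apply_apply] at h3
  rw [h3]
  by_cases h : p = q
  · simp [h, Matrix.one_apply]
  · rw [Matrix.one_apply_ne (fun hc => h (e.injective hc)), if_neg h]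

lemma parseval {n : Type*} [Fintype n] [DecidableEq n] {N : ℕ}
    (hN : Fintype.card (n × n) = N) (G : Fin N → Matrix n n ℂ)
    (hG : ∀ a b, hsInner (G a) (G b) = if a = b then 1 else 0)
    (X Y : Matrix n n ℂ) :
    ∑ a, hsInner X (G a) * hsInner (G a) Y = hsInner X Y := by
  have key := complete hN G hG
  calc ∑ a, hsInner X (G a) * hsInner (G a) Y
      = ∑ a, ∑ p : n × n, ∑ q : n × n,
        (star (X p.1 p.2) * Y q.1 q.2) * (G a p.1 p.2 * star (G a q.1 q.2)) := by
        simp only [hsInner_eq_sum, Finset.sum_mul_sum]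
        exact Finset.sum_congr rfl fun a _ => Finset.sum_congr rfl fun p _ =>
          Finset.sum_congr rfl fun q _ => by ring
    _ = ∑ p : n × n, ∑ q : n × n,
        (star (X p.1 p.2) * Y q.1 q.2) * ∑ a, (G a p.1 p.2 * star (G a q.1 q.2)) := by
        rw [Finset.sum_comm]
        exact Finset.sum_congr rfl fun p _ => by
          rw [Finset.sum_comm]; simp [Finset.mul_sum]
    _ = ∑ p : n × n, star (X p.1 p.2) * Y p.1 p.2 := by
        simp only [key, mul_ite, mul_one, mul_zero]
        exact Finset.sum_congr rfl fun p _ => by simp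
    _ = hsInner X Y := (hsInner_eq_sum X Y).symm

lemma hsNorm_of_unit {n : Type*} [Fintype n] {A : Matrix n n ℂ} (h : hsInner A A = 1) :
    hsNorm A = 1 := by
  rw [hsNorm, h]
  simp

lemma ccn_part1 {NA NB : ℕ} (C : Matrix (Fin NA × Fin NB) (Fin NA × Fin NB) ℂ)
    {μ : Fin (min (NA ^ 2) (NB ^ 2)) → ℝ}
    {E : Fin (min (NA ^ 2) (NB ^ 2)) → Matrix (Fin NA) (Fin NA) ℂ}
    {F : Fin (min (NA ^ 2) (NB ^ 2)) → Matrix (Fin NB) (Fin NB) ℂ}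
    (hS : SchmidtDecomp C μ E F) : ccn C = ∑ a, μ a := by
  obtain ⟨hμ, hE, hF, hC⟩ := hS
  have hmem : ∃ (n : ℕ) (A : Fin n → Matrix (Fin NA) (Fin NA) ℂ)
      (B : Fin n → Matrix (Fin NB) (Fin NB) ℂ),
      C = ∑ k, A k ⊗ₖ B k ∧ (∑ a, μ a) = ∑ k, hsNorm (A k) * hsNorm (B k) := by
    refine ⟨min (NA ^ 2) (NB ^ 2), fun a => (μ a : ℂ) • E a, F, ?_, ?_⟩
    · rw [hC]
      simp only [Matrix.smul_kronecker]
    · refine Finset.sum_congr rfl fun a _ => ?_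
      rw [hsNorm_smul, hsNorm_of_unit (by rw [hE a a, if_pos rfl]),
        hsNorm_of_unit (by rw [hF a a, if_pos rfl])]
      simp [Complex.norm_real, Real.norm_eq_abs, abs_of_nonneg (hμ a)]
  have hlb : ∀ r : ℝ, (∃ (n : ℕ) (A : Fin n → Matrix (Fin NA) (Fin NA) ℂ)
      (B : Fin n → Matrix (Fin NB) (Fin NB) ℂ),
      C = ∑ k, A k ⊗ₖ B k ∧ r = ∑ k, hsNorm (A k) * hsNorm (B k)) → (∑ a, μ a) ≤ r := by
    rintro r ⟨k, A, B, hCab, rfl⟩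
    have hmu : ∀ a, (μ a : ℂ) = ∑ j, hsInner (E a) (A j) * hsInner (F a) (B j) := by
      intro a
      have h1 : hsInner (E a ⊗ₖ F a) C = (μ a : ℂ) := by
        rw [hC, hsInner_sum_right]
        rw [Finset.sum_eq_single a]
        · rw [hsInner_smul_right, hsInner_kron, hE a a, hF a a]
          simp
        · intro b _ hb
          rw [hsInner_smul_right, hsInner_kron, hE a b, if_neg (Ne.symm hb)]
          simp
        · simp
      have h2 : hsInner (E a ⊗ₖ F a) C = ∑ j, hsInner (E a) (A j) * hsInner (F a) (B j) := by
        rw [hCab, hsInner_sum_right]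
        exact Finset.sum_congr rfl fun j _ => hsInner_kron _ _ _ _
      rw [← h2, h1]
    have step1 : ∀ a, μ a ≤ ∑ j, ‖hsInner (E a) (A j)‖ * ‖hsInner (F a) (B j)‖ := by
      intro a
      calc μ a = ((μ a : ℂ)).re := by simp
        _ ≤ ‖(μ a : ℂ)‖ := Complex.re_le_norm _
        _ = ‖∑ j, hsInner (E a) (A j) * hsInner (F a) (B j)‖ := by rw [hmu a]
        _ ≤ ∑ j, ‖hsInner (E a) (A j) * hsInner (F a) (B j)‖ := norm_sum_le _ _
        _ = ∑ j, ‖hsInner (E a) (A j)‖ * ‖hsInner (F a) (B j)‖ := by simp [norm_mul]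
    have csineq : ∀ j, ∑ a, ‖hsInner (E a) (A j)‖ * ‖hsInner (F a) (B j)‖ ≤
        hsNorm (A j) * hsNorm (B j) := by
      intro j
      set f : Fin (min (NA ^ 2) (NB ^ 2)) → ℝ := fun a => ‖hsInner (E a) (A j)‖ with hfdef
      set g : Fin (min (NA ^ 2) (NB ^ 2)) → ℝ := fun a => ‖hsInner (F a) (B j)‖ with hgdef
      have hfg : 0 ≤ ∑ a, f a * g a :=
        Finset.sum_nonneg fun a _ => mul_nonneg (norm_nonneg _) (norm_nonneg _)
      have hcs := Finset.sum_mul_sq_le_sq_mul_sq Finset.univ f g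
      have hbA := bessel hE (A j)
      have hbB := bessel hF (B j)
      have h2 : (∑ a, f a * g a) ^ 2 ≤ (hsNorm (A j) * hsNorm (B j)) ^ 2 := by
        rw [mul_pow]
        exact hcs.trans (mul_le_mul hbA hbB
          (Finset.sum_nonneg fun a _ => sq_nonneg _) (sq_nonneg _))
      calc ∑ a, f a * g a = Real.sqrt ((∑ a, f a * g a) ^ 2) := (Real.sqrt_sq hfg).symm
        _ ≤ Real.sqrt ((hsNorm (A j) * hsNorm (B j)) ^ 2) := Real.sqrt_le_sqrt h2
        _ = hsNorm (A j) * hsNorm (B j) :=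
            Real.sqrt_sq (mul_nonneg (hsNorm_nonneg _) (hsNorm_nonneg _))
    calc ∑ a, μ a ≤ ∑ a, ∑ j, ‖hsInner (E a) (A j)‖ * ‖hsInner (F a) (B j)‖ :=
          Finset.sum_le_sum fun a _ => step1 a
      _ = ∑ j, ∑ a, ‖hsInner (E a) (A j)‖ * ‖hsInner (F a) (B j)‖ := Finset.sum_comm
      _ ≤ ∑ j, hsNorm (A j) * hsNorm (B j) := Finset.sum_le_sum fun j _ => csineq j
  rw [ccn]
  exact le_antisymm (csInf_le ⟨∑ a, μ a, fun r hr => hlb r hr⟩ hmem)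
    (le_csInf ⟨_, hmem⟩ fun r hr => hlb r hr)

open scoped MatrixOrder in
lemma trace_sqrt {N : ℕ} {M : Matrix (Fin N) (Fin N) ℂ} (hM : M.PosSemidef) :
    (CFC.sqrt M).trace = ∑ i, (Real.sqrt (hM.1.eigenvalues i) : ℂ) := by
  rw [CFC.sqrt_eq_cfc, cfc_nnreal_eq_real _ M hM.nonneg, hM.1.cfc_eq, Matrix.IsHermitian.cfc,
    Unitary.conjStarAlgAut_apply, Matrix.trace_mul_comm, ← Matrix.mul_assoc]
  rw [Unitary.coe_star_mul_self, Matrix.one_mul, Matrix.trace_diagonal]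
  refine Finset.sum_congr rfl fun i _ => ?_
  simp [Real.coe_sqrt, Real.coe_toNNReal', hM.eigenvalues_nonneg i]

open scoped MatrixOrder in
lemma part2 {NA NB : ℕ}
    (μ : Fin (min (NA ^ 2) (NB ^ 2)) → ℝ) (hμ : ∀ a, 0 ≤ μ a)
    (E : Fin (min (NA ^ 2) (NB ^ 2)) → Matrix (Fin NA) (Fin NA) ℂ)
    (F : Fin (min (NA ^ 2) (NB ^ 2)) → Matrix (Fin NB) (Fin NB) ℂ)
    (hE : ∀ a b, hsInner (E a) (E b) = if a = b then 1 else 0)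
    (hF : ∀ a b, hsInner (F a) (F b) = if a = b then 1 else 0)
    (FA : Fin (NA ^ 2) → Matrix (Fin NA) (Fin NA) ℂ)
    (FB : Fin (NB ^ 2) → Matrix (Fin NB) (Fin NB) ℂ)
    (hFA : ∀ a b, hsInner (FA a) (FA b) = if a = b then 1 else 0)
    (hFB : ∀ α β, hsInner (FB α) (FB β) = if α = β then 1 else 0)
    (Ct : Matrix (Fin (NA ^ 2)) (Fin (NB ^ 2)) ℂ)
    (hCt : ∀ a α, Ct a α = ∑ b, (μ b : ℂ) * (hsInner (FA a) (E b) * hsInner (FB α) (F b))) :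
    ∑ a, μ a = ∑ α, Real.sqrt ((Matrix.isHermitian_conjTranspose_mul_self Ct).eigenvalues α) := by
  classical
  set U : Matrix (Fin (NA ^ 2)) (Fin (min (NA ^ 2) (NB ^ 2))) ℂ := Matrix.of fun a b => hsInner (FA a) (E b) with hU
  set V : Matrix (Fin (NB ^ 2)) (Fin (min (NA ^ 2) (NB ^ 2))) ℂ := Matrix.of fun α b => hsInner (FB α) (F b) with hV
  set W : Matrix (Fin (NB ^ 2)) (Fin (min (NA ^ 2) (NB ^ 2))) ℂ := Matrix.of fun α b => star (V α b) with hW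
  set D : Matrix (Fin (min (NA ^ 2) (NB ^ 2))) (Fin (min (NA ^ 2) (NB ^ 2))) ℂ := Matrix.diagonal (fun b => (μ b : ℂ)) with hD
  have hNA : Fintype.card (Fin NA × Fin NA) = NA ^ 2 := by simp [sq]
  have hNB : Fintype.card (Fin NB × Fin NB) = NB ^ 2 := by simp [sq]
  -- Ct = U * D * Vᵀ
  have hCt2 : Ct = U * D * Vᵀ := by
    ext a α
    rw [hCt]
    rw [Matrix.mul_apply]
    refine Finset.sum_congr rfl fun b _ => ?_
    rw [Matrix.mul_diagonal]
    simp only [hU, hV, Matrix.of_apply, Matrix.transpose_apply]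
    ring
  -- UᴴU = 1, VᴴV = 1
  have hUU : Uᴴ * U = 1 := by
    ext b c
    simp only [Matrix.mul_apply, Matrix.conjTranspose_apply, hU, Matrix.of_apply]
    calc ∑ a, star (hsInner (FA a) (E b)) * hsInner (FA a) (E c)
        = ∑ a, hsInner (E b) (FA a) * hsInner (FA a) (E c) := by
          simp only [hsInner_conj]
      _ = hsInner (E b) (E c) := parseval hNA FA hFA _ _
      _ = (1 : Matrix (Fin (min (NA ^ 2) (NB ^ 2))) (Fin (min (NA ^ 2) (NB ^ 2))) ℂ) b c := by rw [hE, Matrix.one_apply]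
  have hVV : Vᴴ * V = 1 := by
    ext b c
    simp only [Matrix.mul_apply, Matrix.conjTranspose_apply, hV, Matrix.of_apply]
    calc ∑ α, star (hsInner (FB α) (F b)) * hsInner (FB α) (F c)
        = ∑ α, hsInner (F b) (FB α) * hsInner (FB α) (F c) := by
          simp only [hsInner_conj]
      _ = hsInner (F b) (F c) := parseval hNB FB hFB _ _
      _ = (1 : Matrix (Fin (min (NA ^ 2) (NB ^ 2))) (Fin (min (NA ^ 2) (NB ^ 2))) ℂ) b c := by rw [hF, Matrix.one_apply]
  have hWW : Wᴴ * W = 1 := by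
    ext b c
    have h := congrFun (congrFun hVV c) b
    simp only [Matrix.mul_apply, Matrix.conjTranspose_apply, hW, Matrix.of_apply,
      star_star] at h ⊢
    calc ∑ α, V α b * star (V α c) = ∑ α, star (V α c) * V α b :=
          Finset.sum_congr rfl fun α _ => mul_comm _ _
      _ = (1 : Matrix (Fin (min (NA ^ 2) (NB ^ 2))) (Fin (min (NA ^ 2) (NB ^ 2))) ℂ) c b := h
      _ = (1 : Matrix (Fin (min (NA ^ 2) (NB ^ 2))) (Fin (min (NA ^ 2) (NB ^ 2))) ℂ) b c := by
          by_cases hbc : b = c <;> simp [Matrix.one_apply, hbc, eq_comm]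
  -- conjTranspose facts
  have hWH : Wᴴ = Vᵀ := by
    ext b α
    simp [hW, Matrix.conjTranspose_apply, Matrix.transpose_apply, star_star]
  have hVTH : Vᵀᴴ = W := by
    ext α b
    simp [hW, Matrix.conjTranspose_apply, Matrix.transpose_apply]
  have hDH : Dᴴ = D := by
    rw [hD, Matrix.diagonal_conjTranspose]
    exact congrArg Matrix.diagonal (funext fun b => by
      show star ((μ b : ℝ) : ℂ) = _
      rw [Complex.star_def, Complex.conj_ofReal])
  have hCtH : Ctᴴ = W * D * Uᴴ := by
    rw [hCt2, Matrix.conjTranspose_mul, Matrix.conjTranspose_mul, hVTH, hDH,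
      ← Matrix.mul_assoc]
  have collapseW : ∀ {m : Type} (X : Matrix (Fin (min (NA ^ 2) (NB ^ 2))) m ℂ),
      Wᴴ * (W * X) = X := fun X => by rw [← Matrix.mul_assoc, hWW, Matrix.one_mul]
  have collapseU : ∀ {m : Type} (X : Matrix (Fin (min (NA ^ 2) (NB ^ 2))) m ℂ),
      Uᴴ * (U * X) = X := fun X => by rw [← Matrix.mul_assoc, hUU, Matrix.one_mul]
  set S : Matrix (Fin (NB ^ 2)) (Fin (NB ^ 2)) ℂ := W * D * Wᴴ with hSdef
  have hsq : S ^ 2 = Ctᴴ * Ct := by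
    have hS2 : S ^ 2 = S * S := pow_two S
    rw [hS2]
    rw [hSdef]
    rw [hCtH]
    rw [hCt2]
    simp only [Matrix.mul_assoc]
    rw [collapseW, collapseU, hWH]
  -- positive semidefiniteness of S
  set R : Matrix (Fin (min (NA ^ 2) (NB ^ 2))) (Fin (min (NA ^ 2) (NB ^ 2))) ℂ :=
    Matrix.diagonal (fun b => (Real.sqrt (μ b) : ℂ)) with hR
  have hRH : Rᴴ = R := by
    rw [hR, Matrix.diagonal_conjTranspose]
    exact congrArg Matrix.diagonal (funext fun b => by
      show star ((Real.sqrt (μ b) : ℝ) : ℂ) = _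
      rw [Complex.star_def, Complex.conj_ofReal])
  have hRR : R * R = D := by
    rw [hR, hD, Matrix.diagonal_mul_diagonal]
    exact congrArg Matrix.diagonal (funext fun b => by
      rw [← Complex.ofReal_mul, Real.mul_self_sqrt (hμ b)])
  have hSpsd : S.PosSemidef := by
    have h1 : S = (W * R) * (W * R)ᴴ := by
      rw [Matrix.conjTranspose_mul, hRH, hSdef, ← hRR]
      simp only [Matrix.mul_assoc]
    rw [h1]
    exact Matrix.posSemidef_self_mul_conjTranspose _
  have hMpsd : (Ctᴴ * Ct).PosSemidef := Matrix.posSemidef_conjTranspose_mul_self Ct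
  have hsqrt : S = CFC.sqrt (Ctᴴ * Ct) :=
    (CFC.sqrt_unique (by rw [← pow_two]; exact hsq) hSpsd.nonneg).symm
  -- trace computations
  have t1 : (CFC.sqrt (Ctᴴ * Ct)).trace = ∑ α, (Real.sqrt (hMpsd.1.eigenvalues α) : ℂ) := trace_sqrt hMpsd
  have t2 : S.trace = ∑ b, (μ b : ℂ) := by
    rw [hSdef, Matrix.trace_mul_cycle, hWW, Matrix.one_mul, hD, Matrix.trace_diagonal]
  have key : ((∑ α, Real.sqrt (hMpsd.1.eigenvalues α) : ℝ) : ℂ) = ((∑ a, μ a : ℝ) : ℂ) := by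
    push_cast
    rw [← t1, ← hsqrt, t2]
  have key2 : ∑ α, Real.sqrt (hMpsd.1.eigenvalues α) = ∑ a, μ a := by
    exact_mod_cast key
  rw [← key2]


/-- The CCN of a bipartite operator equals the sum of its Schmidt coefficients, and also
equals the trace norm of its coefficient matrix with respect to any pair of
Hilbert-Schmidt-orthonormal local bases. -/
theorem stmt7_ccn_eq_sum_schmidt_coefficients {NA NB : ℕ} (hA : 2 ≤ NA) (hB : 2 ≤ NB)
    (C : Matrix (Fin NA × Fin NB) (Fin NA × Fin NB) ℂ)
    (μ : Fin (min (NA ^ 2) (NB ^ 2)) → ℝ)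
    (E : Fin (min (NA ^ 2) (NB ^ 2)) → Matrix (Fin NA) (Fin NA) ℂ)
    (F : Fin (min (NA ^ 2) (NB ^ 2)) → Matrix (Fin NB) (Fin NB) ℂ)
    (hS : SchmidtDecomp C μ E F)
    (FA : Fin (NA ^ 2) → Matrix (Fin NA) (Fin NA) ℂ)
    (FB : Fin (NB ^ 2) → Matrix (Fin NB) (Fin NB) ℂ)
    (hFA : ∀ a b, hsInner (FA a) (FA b) = if a = b then 1 else 0)
    (hFB : ∀ α β, hsInner (FB α) (FB β) = if α = β then 1 else 0)
    (Ct : Matrix (Fin (NA ^ 2)) (Fin (NB ^ 2)) ℂ)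
    (hCt : ∀ a α, Ct a α = hsInner (FA a ⊗ₖ FB α) C) :
    ccn C = ∑ a, μ a ∧
    ccn C = ∑ α, Real.sqrt ((Matrix.isHermitian_conjTranspose_mul_self Ct).eigenvalues α) := by
  obtain ⟨hμ, hE, hF, hC⟩ := hS
  have h1 : ccn C = ∑ a, μ a := ccn_part1 C ⟨hμ, hE, hF, hC⟩
  have hCt' : ∀ a α, Ct a α =
      ∑ b, (μ b : ℂ) * (hsInner (FA a) (E b) * hsInner (FB α) (F b)) := by
    intro a α
    rw [hCt a α, hC, hsInner_sum_right]
    exact Finset.sum_congr rfl fun b _ => by rw [hsInner_smul_right, hsInner_kron]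
  have h2 := part2 μ hμ E F hE hF FA FB hFA hFB Ct hCt'
  exact ⟨h1, by rw [h1, h2]⟩
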